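/- Let A, E ∈ ℝ^{d×d} and let Q = [q₁, Q₂] ∈ ℝ^{d×d} be orthogonal with first column q₁. Write Qᵀ A Q in block form with (1,1)-entry λ, first row off-diagonal block vᵀ, zero (2,1)-block, and (2,2)-block T₂₂; write Qᵀ E Q in block form with (1,1)-entry ε, blocks rᵀ, δ, E₂₂. If σ = σ_min(T₂₂ − λI) > 0 and ‖E‖₂(1 + 5‖v‖₂/σ) ≤ σ/5, then there exists u ∈ ℝ^{d−1} with ‖u‖₂ ≤ 4‖δ‖₂/σ such that q̃₁ = (q₁ + Q₂ u)/√(1 + uᵀu) is a unit 2-norm eigenvector of A + E. -/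

import Mathlib

noncomputable def opNorm {m n : ℕ} (A : Matrix (Fin m) (Fin n) ℝ) : ℝ :=
  ‖(Matrix.toEuclideanLin A).toContinuousLinearMap‖

noncomputable def _root_.enorm {n : ℕ} (v : Fin n → ℝ) : ℝ := Real.sqrt (∑ i, v i ^ 2)

/-- smallest singular value of a square matrix -/
noncomputable def sigmaMin {k : ℕ} (M : Matrix (Fin k) (Fin k) ℝ) : ℝ :=
  sInf {t | ∃ w : Fin k → ℝ, _root_.enorm w = 1 ∧ t = _root_.enorm (M.mulVec w)}

section Helpers

open Matrix

lemma enorm_eq_norm' {n : ℕ} (v : Fin n → ℝ) :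
    _root_.enorm v = ‖(WithLp.equiv 2 (Fin n → ℝ)).symm v‖ := by
  rw [EuclideanSpace.norm_eq]
  simp [_root_.enorm, sq_abs, WithLp.equiv_symm_apply, PiLp.toLp_apply]

lemma enorm_nonneg' {n : ℕ} (v : Fin n → ℝ) : 0 ≤ _root_.enorm v := Real.sqrt_nonneg _

lemma enorm_sq' {n : ℕ} (v : Fin n → ℝ) : _root_.enorm v ^ 2 = ∑ i, v i ^ 2 := by
  rw [_root_.enorm, Real.sq_sqrt]; positivity

lemma enorm_eq_zero'' {n : ℕ} {v : Fin n → ℝ} (h : _root_.enorm v = 0) : v = 0 := by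
  have h2 : ∑ i, v i ^ 2 = 0 := by
    have := enorm_sq' v; rw [h] at this; linarith [this]
  funext i
  have := (Finset.sum_eq_zero_iff_of_nonneg (fun i _ => sq_nonneg (v i))).mp h2 i
    (Finset.mem_univ i)
  exact pow_eq_zero_iff (by norm_num) |>.mp this

lemma mulVec_enorm_le {m n : ℕ} (A : Matrix (Fin m) (Fin n) ℝ) (x : Fin n → ℝ) :
    _root_.enorm (A.mulVec x) ≤ opNorm A * _root_.enorm x := by
  rw [enorm_eq_norm', enorm_eq_norm']
  have := (Matrix.toEuclideanLin A).toContinuousLinearMap.le_opNorm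
    ((WithLp.equiv 2 (Fin n → ℝ)).symm x)
  simpa [Matrix.toEuclideanLin_apply, opNorm] using this

lemma enorm_add_le' {n : ℕ} (a b : Fin n → ℝ) : _root_.enorm (a + b) ≤ _root_.enorm a + _root_.enorm b := by
  rw [enorm_eq_norm', enorm_eq_norm', enorm_eq_norm']
  exact norm_add_le _ _

lemma enorm_smul' {n : ℕ} (c : ℝ) (a : Fin n → ℝ) : _root_.enorm (c • a) = |c| * _root_.enorm a := by
  rw [enorm_eq_norm', enorm_eq_norm']
  have : (WithLp.equiv 2 (Fin n → ℝ)).symm (c • a) = c • (WithLp.equiv 2 (Fin n → ℝ)).symm a := rfl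
  rw [this, norm_smul, Real.norm_eq_abs]

lemma enorm_neg' {n : ℕ} (a : Fin n → ℝ) : _root_.enorm (-a) = _root_.enorm a := by simp [_root_.enorm]

lemma abs_dot_le' {n : ℕ} (a b : Fin n → ℝ) : |∑ i, a i * b i| ≤ _root_.enorm a * _root_.enorm b := by
  rw [enorm_eq_norm', enorm_eq_norm']
  have h := abs_real_inner_le_norm ((WithLp.equiv 2 (Fin n → ℝ)).symm a)
    ((WithLp.equiv 2 (Fin n → ℝ)).symm b)
  simpa [PiLp.inner_apply, RCLike.inner_apply, WithLp.equiv_symm_apply, PiLp.toLp_apply, mul_comm] using h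

lemma enorm_mulVec_orth {n : ℕ} (Q : Matrix (Fin n) (Fin n) ℝ) (hQ : Q.transpose * Q = 1)
    (x : Fin n → ℝ) : _root_.enorm (Q.mulVec x) = _root_.enorm x := by
  have h : ∑ i, (Q.mulVec x) i ^ 2 = ∑ i, x i ^ 2 := by
    have h1 : (Q.mulVec x) ⬝ᵥ (Q.mulVec x) = x ⬝ᵥ x := by
      rw [Matrix.dotProduct_mulVec, ← Matrix.mulVec_transpose, Matrix.mulVec_mulVec, hQ,
        Matrix.one_mulVec]
    simpa [dotProduct, sq] using h1
  rw [_root_.enorm, _root_.enorm, h]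

lemma sigmaMin_le' {k : ℕ} (M : Matrix (Fin k) (Fin k) ℝ) (w : Fin k → ℝ) :
    sigmaMin M * _root_.enorm w ≤ _root_.enorm (M.mulVec w) := by
  rcases eq_or_ne (_root_.enorm w) 0 with h0 | h0
  · rw [h0, mul_zero]; exact enorm_nonneg' _
  have hwpos : 0 < _root_.enorm w := lt_of_le_of_ne (enorm_nonneg' _) (Ne.symm h0)
  have hmem : _root_.enorm (M.mulVec ((_root_.enorm w)⁻¹ • w)) ∈
      {t | ∃ w' : Fin k → ℝ, _root_.enorm w' = 1 ∧ t = _root_.enorm (M.mulVec w')} := by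
    refine ⟨(_root_.enorm w)⁻¹ • w, ?_, rfl⟩
    rw [enorm_smul', abs_of_pos (by positivity), inv_mul_cancel₀ h0]
  have hbdd : BddBelow {t | ∃ w' : Fin k → ℝ, _root_.enorm w' = 1 ∧ t = _root_.enorm (M.mulVec w')} :=
    ⟨0, by rintro t ⟨w', _, rfl⟩; exact enorm_nonneg' _⟩
  have hle := csInf_le hbdd hmem
  rw [show M.mulVec ((_root_.enorm w)⁻¹ • w) = (_root_.enorm w)⁻¹ • M.mulVec w from by
    rw [Matrix.mulVec_smul]] at hle
  rw [enorm_smul', abs_of_pos (by positivity)] at hle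
  calc sigmaMin M * _root_.enorm w ≤ ((_root_.enorm w)⁻¹ * _root_.enorm (M.mulVec w)) * _root_.enorm w :=
        mul_le_mul_of_nonneg_right hle hwpos.le
    _ = _root_.enorm (M.mulVec w) := by field_simp

lemma enorm_cons {n : ℕ} (a : ℝ) (u : Fin n → ℝ) :
    _root_.enorm (Fin.cons a u) = Real.sqrt (a ^ 2 + ∑ j, u j ^ 2) := by
  rw [_root_.enorm, Fin.sum_univ_succ]
  simp

lemma enorm_tail_le {n : ℕ} (w : Fin (n + 1) → ℝ) :
    _root_.enorm (fun j : Fin n => w j.succ) ≤ _root_.enorm w := by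
  rw [_root_.enorm, _root_.enorm, Fin.sum_univ_succ]
  exact Real.sqrt_le_sqrt (by nlinarith [sq_nonneg (w 0)])

lemma abs_entry_le_enorm {n : ℕ} (w : Fin n → ℝ) (i : Fin n) : |w i| ≤ _root_.enorm w := by
  rw [_root_.enorm, ← Real.sqrt_sq_eq_abs]
  exact Real.sqrt_le_sqrt (Finset.single_le_sum (fun j _ => sq_nonneg (w j))
    (Finset.mem_univ i))

end Helpers

lemma num1 {σ η w d t : ℝ} (hσ : 0 < σ) (hηnn : 0 ≤ η) (hw : 0 ≤ w) (hdnn : 0 ≤ d)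
    (htnn : 0 ≤ t) (hd : d ≤ η) (hη5 : 5 * η ≤ σ) (hηv : 25 * (η * w) ≤ σ ^ 2)
    (htσ : t * σ ≤ 3 * d) :
    d + η * t + (η + (w + η) * t) * t ≤ 3 * d := by
  have hσ2 : 0 < σ ^ 2 := pow_pos hσ 2
  have a1 : 5 * (η * t) ≤ 3 * d := by nlinarith
  have hη2 : 25 * η ^ 2 ≤ σ ^ 2 := by nlinarith
  have ht3 : σ ^ 2 * t ^ 2 ≤ 9 * d ^ 2 := by
    nlinarith [mul_self_le_mul_self (mul_nonneg htnn hσ.le) htσ]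
  have a2 : σ ^ 2 * (25 * (w * t ^ 2)) ≤ σ ^ 2 * (9 * d) := by
    nlinarith [mul_le_mul_of_nonneg_left ht3 hw,
      mul_le_mul_of_nonneg_left hηv hdnn,
      mul_le_mul_of_nonneg_left hd (mul_nonneg hdnn hw)]
  have a2' : 25 * (w * t ^ 2) ≤ 9 * d := le_of_mul_le_mul_left a2 hσ2
  have a3 : σ ^ 2 * (25 * (η * t ^ 2)) ≤ σ ^ 2 * (9 * d) := by
    nlinarith [mul_le_mul_of_nonneg_left ht3 hηnn,
      mul_le_mul_of_nonneg_left hd (mul_nonneg hdnn hηnn),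
      mul_le_mul_of_nonneg_left hη2 hdnn]
  have a3' : 25 * (η * t ^ 2) ≤ 9 * d := le_of_mul_le_mul_left a3 hσ2
  nlinarith

lemma num2 {σ η w d ρ : ℝ} (hσ : 0 < σ) (hηnn : 0 ≤ η) (hw : 0 ≤ w) (hdnn : 0 ≤ d)
    (hd : d ≤ η) (hη5 : 5 * η ≤ σ) (hηv : 25 * (η * w) ≤ σ ^ 2)
    (hρσ : ρ * σ = 3 * d) :
    2 * η + 2 * (w + η) * ρ ≤ 22 / 25 * σ := by
  have hσ2 : 0 < σ ^ 2 := pow_pos hσ 2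
  have key : (2 * η + 2 * (w + η) * ρ) * σ ≤ (22 / 25 * σ) * σ := by
    have h1 : (2 * η + 2 * (w + η) * ρ) * σ = 2 * η * σ + 2 * (w + η) * (3 * d) := by
      rw [← hρσ]; ring
    rw [h1]
    nlinarith [mul_le_mul_of_nonneg_left hd hw, mul_le_mul_of_nonneg_left hd hηnn]
  exact le_of_mul_le_mul_right key hσ

set_option maxHeartbeats 1000000 in
theorem stmt5 {m : ℕ} (A E Q : Matrix (Fin (m + 1)) (Fin (m + 1)) ℝ)
    (hQ : Q.transpose * Q = 1)
    -- block entries of Qᵀ A Q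
    (lam : ℝ) (v : Fin m → ℝ) (T22 : Matrix (Fin m) (Fin m) ℝ)
    (hlam : (Q.transpose * A * Q) 0 0 = lam)
    (hv : ∀ j : Fin m, (Q.transpose * A * Q) 0 j.succ = v j)
    (hzero : ∀ j : Fin m, (Q.transpose * A * Q) j.succ 0 = 0)
    (hT : ∀ i j : Fin m, (Q.transpose * A * Q) i.succ j.succ = T22 i j)
    -- block entries of Qᵀ E Q
    (δv : Fin m → ℝ)
    (hδ : ∀ j : Fin m, (Q.transpose * E * Q) j.succ 0 = δv j)
    (σ : ℝ) (hσdef : σ = sigmaMin (T22 - lam • (1 : Matrix (Fin m) (Fin m) ℝ)))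
    (hσpos : 0 < σ)
    (hE : opNorm E * (1 + 5 * _root_.enorm v / σ) ≤ σ / 5) :
    ∃ u : Fin m → ℝ, _root_.enorm u ≤ 4 * _root_.enorm δv / σ ∧
      (let q1 : Fin (m + 1) → ℝ := fun i => Q i 0
       let Q2 : Matrix (Fin (m + 1)) (Fin m) ℝ := Matrix.of fun i j => Q i j.succ
       let qt : Fin (m + 1) → ℝ :=
         fun i => (q1 i + Q2.mulVec u i) / Real.sqrt (1 + ∑ j, u j ^ 2)
       _root_.enorm qt = 1 ∧ ∃ μ : ℝ, (A + E).mulVec qt = μ • qt) := by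
  classical
  set MA := Q.transpose * A * Q with hMAdef
  set ME := Q.transpose * E * Q with hMEdef
  set η := opNorm E with hηdef
  have hηnn : 0 ≤ η := norm_nonneg _
  have hQQ : Q * Q.transpose = 1 := mul_eq_one_comm.mp hQ
  have hQt : Q.transpose.transpose * Q.transpose = 1 := by
    rw [Matrix.transpose_transpose]; exact hQQ
  have hMEle : ∀ y, _root_.enorm (ME.mulVec y) ≤ η * _root_.enorm y := by
    intro y
    have h1 : ME.mulVec y = Q.transpose.mulVec (E.mulVec (Q.mulVec y)) := by
      rw [Matrix.mulVec_mulVec, Matrix.mulVec_mulVec, hMEdef]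
    rw [h1, enorm_mulVec_orth _ hQt, ← enorm_mulVec_orth Q hQ y]
    exact mulVec_enorm_le _ _
  set ε := ME 0 0 with hεdef
  set r : Fin m → ℝ := fun j => ME 0 j.succ with hrdef
  set E22 : Matrix (Fin m) (Fin m) ℝ := Matrix.of (fun i j => ME i.succ j.succ) with hE22def
  have hδv : δv = fun j => ME j.succ 0 := funext fun j => (hδ j).symm
  -- column bound
  have hcol : _root_.enorm (fun i : Fin (m+1) => ME i 0) ≤ η := by
    have h1 : (fun i => ME i 0) = ME.mulVec (Pi.single 0 1) := by
      funext i
      simp [Matrix.mulVec, dotProduct, Pi.single_apply]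
    have h2 : _root_.enorm (Pi.single (0 : Fin (m+1)) (1 : ℝ)) = 1 := by
      simp [_root_.enorm, Pi.single_apply]
    rw [h1]
    have := hMEle (Pi.single 0 1)
    rwa [h2, mul_one] at this
  have hdle : _root_.enorm δv ≤ η := by
    rw [hδv]
    exact le_trans (enorm_tail_le (fun i => ME i 0)) hcol
  have hεle : |ε| ≤ η :=
    le_trans (abs_entry_le_enorm (fun i : Fin (m+1) => ME i 0) 0) hcol
  -- row bound
  have hrow : _root_.enorm (fun j : Fin (m+1) => ME 0 j) ≤ η := by
    set y : Fin (m+1) → ℝ := fun j => ME 0 j with hydef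
    have h0 : (ME.mulVec y) 0 = _root_.enorm y ^ 2 := by
      rw [enorm_sq']
      simp [Matrix.mulVec, dotProduct, hydef, sq]
    have h1 : _root_.enorm y ^ 2 ≤ η * _root_.enorm y := by
      calc _root_.enorm y ^ 2 = |(ME.mulVec y) 0| := by rw [h0, abs_of_nonneg (by positivity)]
        _ ≤ _root_.enorm (ME.mulVec y) := abs_entry_le_enorm _ _
        _ ≤ η * _root_.enorm y := hMEle y
    rcases eq_or_lt_of_le (enorm_nonneg' y) with h2 | h2
    · rw [← h2]; exact hηnn
    · nlinarith
  have hrle : _root_.enorm r ≤ η :=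
    le_trans (enorm_tail_le (fun j => ME 0 j)) hrow
  have hE22le : ∀ u : Fin m → ℝ, _root_.enorm (E22.mulVec u) ≤ η * _root_.enorm u := by
    intro u
    set y : Fin (m+1) → ℝ := Fin.cons 0 u with hydef
    have h1 : E22.mulVec u = fun i => (ME.mulVec y) i.succ := by
      funext i
      simp [Matrix.mulVec, dotProduct, hE22def, hydef, Fin.sum_univ_succ]
    have h2 : _root_.enorm y = _root_.enorm u := by
      rw [hydef, enorm_cons]
      simp [_root_.enorm]
    calc _root_.enorm (E22.mulVec u) = _root_.enorm (fun i => (ME.mulVec y) i.succ) := by rw [h1]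
      _ ≤ _root_.enorm (ME.mulVec y) := enorm_tail_le _
      _ ≤ η * _root_.enorm y := hMEle y
      _ = η * _root_.enorm u := by rw [h2]
  -- T and its inverse
  set T : Matrix (Fin m) (Fin m) ℝ := T22 - lam • (1 : Matrix (Fin m) (Fin m) ℝ) with hTdef
  have hσT : ∀ w, σ * _root_.enorm w ≤ _root_.enorm (T.mulVec w) := by
    intro w; rw [hσdef]; exact sigmaMin_le' T w
  have hTinj : Function.Injective T.mulVec := by
    intro a b hab
    have h0 : T.mulVec (a - b) = 0 := by rw [Matrix.mulVec_sub, hab, sub_self]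
    have h1 := hσT (a - b)
    rw [h0] at h1
    have h2 : _root_.enorm (0 : Fin m → ℝ) = 0 := by simp [_root_.enorm]
    rw [h2] at h1
    have h3 : _root_.enorm (a - b) = 0 := le_antisymm (by nlinarith [enorm_nonneg' (a - b)]) (enorm_nonneg' _)
    have := enorm_eq_zero'' h3
    exact sub_eq_zero.mp this
  have hTunit : IsUnit T := Matrix.mulVec_injective_iff_isUnit.mp hTinj
  have hTdet : IsUnit T.det := (Matrix.isUnit_iff_isUnit_det T).mp hTunit
  set N := T⁻¹ with hNdef
  have hTN : T * N = 1 := Matrix.mul_nonsing_inv T hTdet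
  have hTNv : ∀ y, T.mulVec (N.mulVec y) = y := by
    intro y; rw [Matrix.mulVec_mulVec, hTN, Matrix.one_mulVec]
  have hNle : ∀ y, _root_.enorm (N.mulVec y) ≤ σ⁻¹ * _root_.enorm y := by
    intro y
    have h1 := hσT (N.mulVec y)
    rw [hTNv] at h1
    rw [inv_mul_eq_div, le_div_iff₀ hσpos]
    linarith [h1]
  -- numeric facts
  have hη5 : 5 * η ≤ σ := by
    have h1 : 0 ≤ η * (5 * _root_.enorm v / σ) := mul_nonneg hηnn (div_nonneg (by nlinarith [enorm_nonneg' v]) hσpos.le)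
    nlinarith [hE]
  have hηv : 25 * (η * _root_.enorm v) ≤ σ ^ 2 := by
    have h1 := mul_le_mul_of_nonneg_right hE hσpos.le
    have h2 : η * (1 + 5 * _root_.enorm v / σ) * σ = η * σ + 5 * (η * _root_.enorm v) := by
      field_simp
    rw [h2] at h1
    nlinarith [mul_nonneg hηnn hσpos.le]
  set ρ : ℝ := 3 * _root_.enorm δv / σ with hρdef
  have hρnn : 0 ≤ ρ := by
    rw [hρdef]
    exact div_nonneg (by nlinarith [enorm_nonneg' δv]) hσpos.le
  have hρσ : ρ * σ = 3 * _root_.enorm δv := by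
    rw [hρdef, div_mul_cancel₀ _ (ne_of_gt hσpos)]
  -- the fixed point map
  set g : Fin m → ℝ := fun j => v j + r j with hgdef
  have hgle : _root_.enorm g ≤ _root_.enorm v + η := by
    have h1 : g = v + r := rfl
    rw [h1]
    exact le_trans (enorm_add_le' v r) (by linarith [hrle])
  set dot : (Fin m → ℝ) → ℝ := fun u => ∑ j, g j * u j with hdotdef
  have hdotle : ∀ u, |dot u| ≤ (_root_.enorm v + η) * _root_.enorm u := by
    intro u
    exact le_trans (abs_dot_le' g u)
      (mul_le_mul_of_nonneg_right hgle (enorm_nonneg' u))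
  set RHS : (Fin m → ℝ) → (Fin m → ℝ) :=
    fun u => -δv - E22.mulVec u + (ε + dot u) • u with hRHSdef
  set F : (Fin m → ℝ) → (Fin m → ℝ) := fun u => N.mulVec (RHS u) with hFdef
  have hRHSle : ∀ u, _root_.enorm (RHS u) ≤
      _root_.enorm δv + η * _root_.enorm u + (η + (_root_.enorm v + η) * _root_.enorm u) * _root_.enorm u := by
    intro u
    have h1 : RHS u = (-δv + -(E22.mulVec u)) + (ε + dot u) • u := by
      rw [hRHSdef]; funext i; simp [sub_eq_add_neg]
    rw [h1]
    have h2 := enorm_add_le' (-δv + -(E22.mulVec u)) ((ε + dot u) • u)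
    have h3 := enorm_add_le' (-δv) (-(E22.mulVec u))
    rw [enorm_neg', enorm_neg'] at h3
    have h4 : _root_.enorm ((ε + dot u) • u) ≤ (η + (_root_.enorm v + η) * _root_.enorm u) * _root_.enorm u := by
      rw [enorm_smul']
      have h5 : |ε + dot u| ≤ η + (_root_.enorm v + η) * _root_.enorm u :=
        le_trans (abs_add_le _ _) (by linarith [hεle, hdotle u])
      exact mul_le_mul_of_nonneg_right h5 (enorm_nonneg' u)
    have h6 := hE22le u
    nlinarith [enorm_nonneg' u]
  have hFinv : ∀ u, _root_.enorm u ≤ ρ → _root_.enorm (F u) ≤ ρ := by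
    intro u hu
    have h1 := hNle (RHS u)
    have h2 := hRHSle u
    have htσ : _root_.enorm u * σ ≤ 3 * _root_.enorm δv := by
      calc _root_.enorm u * σ ≤ ρ * σ := mul_le_mul_of_nonneg_right hu hσpos.le
        _ = 3 * _root_.enorm δv := hρσ
    have hnum : _root_.enorm (RHS u) ≤ 3 * _root_.enorm δv := by
      have := num1 hσpos hηnn (enorm_nonneg' v) (enorm_nonneg' δv) (enorm_nonneg' u)
        hdle hη5 hηv htσ
      linarith [h2]
    calc _root_.enorm (F u) ≤ σ⁻¹ * _root_.enorm (RHS u) := h1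
      _ ≤ σ⁻¹ * (3 * _root_.enorm δv) :=
        mul_le_mul_of_nonneg_left hnum (by positivity)
      _ = ρ := by rw [hρdef]; field_simp
  have hFlip : ∀ u u', _root_.enorm u ≤ ρ → _root_.enorm u' ≤ ρ →
      _root_.enorm (F u - F u') ≤ 22/25 * _root_.enorm (u - u') := by
    intro u u' hu hu'
    have hdotsub : dot u - dot u' = ∑ j, g j * (u - u') j := by
      simp [hdotdef, Pi.sub_apply, mul_sub, Finset.sum_sub_distrib]
    have hdiff : RHS u - RHS u' =
        -(E22.mulVec (u - u')) + ((ε + dot u) • (u - u') + (dot u - dot u') • u') := by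
      have hE22sub : E22.mulVec (u - u') = E22.mulVec u - E22.mulVec u' :=
        Matrix.mulVec_sub E22 u u'
      funext i
      simp only [hRHSdef, Pi.sub_apply, Pi.add_apply, Pi.neg_apply, Pi.smul_apply,
        smul_eq_mul, hE22sub]
      ring
    have hFsub : F u - F u' = N.mulVec (RHS u - RHS u') := by
      rw [hFdef, Matrix.mulVec_sub]
    have h1 : _root_.enorm (RHS u - RHS u') ≤ (2 * η + 2 * (_root_.enorm v + η) * ρ) * _root_.enorm (u - u') := by
      rw [hdiff]
      have ha := enorm_add_le' (-(E22.mulVec (u - u')))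
        ((ε + dot u) • (u - u') + (dot u - dot u') • u')
      have hb := enorm_add_le' ((ε + dot u) • (u - u')) ((dot u - dot u') • u')
      rw [enorm_neg'] at ha
      have hc : _root_.enorm ((ε + dot u) • (u - u')) ≤ (η + (_root_.enorm v + η) * ρ) * _root_.enorm (u - u') := by
        rw [enorm_smul']
        have h5 : |ε + dot u| ≤ η + (_root_.enorm v + η) * ρ := by
          have := hdotle u
          have h6 : (_root_.enorm v + η) * _root_.enorm u ≤ (_root_.enorm v + η) * ρ :=
            mul_le_mul_of_nonneg_left hu (by linarith [enorm_nonneg' v])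
          calc |ε + dot u| ≤ |ε| + |dot u| := abs_add_le _ _
            _ ≤ η + (_root_.enorm v + η) * ρ := by linarith [hεle]
        exact mul_le_mul_of_nonneg_right h5 (enorm_nonneg' _)
      have hd : _root_.enorm ((dot u - dot u') • u') ≤ ((_root_.enorm v + η) * ρ) * _root_.enorm (u - u') := by
        rw [enorm_smul', hdotsub]
        have h5 : |∑ j, g j * (u - u') j| ≤ (_root_.enorm v + η) * _root_.enorm (u - u') :=
          le_trans (abs_dot_le' g (u - u'))
            (mul_le_mul_of_nonneg_right hgle (enorm_nonneg' _))
        calc |∑ j, g j * (u - u') j| * _root_.enorm u' ≤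
            ((_root_.enorm v + η) * _root_.enorm (u - u')) * _root_.enorm u' :=
              mul_le_mul_of_nonneg_right h5 (enorm_nonneg' _)
          _ ≤ ((_root_.enorm v + η) * _root_.enorm (u - u')) * ρ := by
              exact mul_le_mul_of_nonneg_left hu'
                (mul_nonneg (by nlinarith [enorm_nonneg' v]) (enorm_nonneg' _))
          _ = ((_root_.enorm v + η) * ρ) * _root_.enorm (u - u') := by ring
      have he := hE22le (u - u')
      nlinarith [enorm_nonneg' (u - u')]
    have hL : σ⁻¹ * (2 * η + 2 * (_root_.enorm v + η) * ρ) ≤ 22/25 := by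
      rw [inv_mul_eq_div, div_le_iff₀ hσpos]
      have := num2 hσpos hηnn (enorm_nonneg' v) (enorm_nonneg' δv) hdle hη5 hηv hρσ
      linarith
    calc _root_.enorm (F u - F u') = _root_.enorm (N.mulVec (RHS u - RHS u')) := by rw [hFsub]
      _ ≤ σ⁻¹ * _root_.enorm (RHS u - RHS u') := hNle _
      _ ≤ σ⁻¹ * ((2 * η + 2 * (_root_.enorm v + η) * ρ) * _root_.enorm (u - u')) :=
          mul_le_mul_of_nonneg_left h1 (by positivity)
      _ = (σ⁻¹ * (2 * η + 2 * (_root_.enorm v + η) * ρ)) * _root_.enorm (u - u') := by ring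
      _ ≤ 22/25 * _root_.enorm (u - u') :=
          mul_le_mul_of_nonneg_right hL (enorm_nonneg' _)
  -- fixed point via contraction
  obtain ⟨u, huρ, hufix⟩ : ∃ u : Fin m → ℝ, _root_.enorm u ≤ ρ ∧ F u = u := by
    set eqv : (Fin m → ℝ) ≃ EuclideanSpace ℝ (Fin m) :=
      (WithLp.equiv 2 (Fin m → ℝ)).symm with heqv
    have hnorm : ∀ x : Fin m → ℝ, ‖eqv x‖ = _root_.enorm x := fun x => (enorm_eq_norm' x).symm
    set S : Set (EuclideanSpace ℝ (Fin m)) := Metric.closedBall 0 ρ with hSdef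
    have hmem : ∀ x : Fin m → ℝ, eqv x ∈ S ↔ _root_.enorm x ≤ ρ := by
      intro x
      rw [hSdef, Metric.mem_closedBall, dist_zero_right, hnorm]
    have hS0 : (0 : EuclideanSpace ℝ (Fin m)) ∈ S := Metric.mem_closedBall_self hρnn
    haveI : Nonempty S := ⟨⟨0, hS0⟩⟩
    haveI : CompleteSpace S := (Metric.isClosed_closedBall).completeSpace_coe
    have hmem' : ∀ y : S, _root_.enorm (eqv.symm y.1) ≤ ρ := by
      intro y
      have : eqv (eqv.symm y.1) ∈ S := by rw [Equiv.apply_symm_apply]; exact y.2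
      exact (hmem _).mp this
    set F' : S → S := fun y => ⟨eqv (F (eqv.symm y.1)), (hmem _).mpr (hFinv _ (hmem' y))⟩
      with hF'def
    have hC : ContractingWith (22/25 : NNReal) F' := by
      constructor
      · rw [← NNReal.coe_lt_one]; norm_num
      · apply LipschitzWith.of_dist_le_mul
        intro a b
        have h1 : dist (F' a) (F' b) = ‖(F' a).1 - (F' b).1‖ := by
          rw [Subtype.dist_eq, dist_eq_norm]
        have h2 : (F' a).1 - (F' b).1 = eqv (F (eqv.symm a.1) - F (eqv.symm b.1)) := rfl
        have h3 : dist a b = _root_.enorm (eqv.symm a.1 - eqv.symm b.1) := by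
          rw [Subtype.dist_eq, dist_eq_norm, ← hnorm]
          rfl
        rw [h1, h2, hnorm, h3]
        have hcoe : ((22/25 : NNReal) : ℝ) = 22/25 := by norm_num
        rw [hcoe]
        exact hFlip _ _ (hmem' a) (hmem' b)
    set y0 := ContractingWith.fixedPoint F' hC with hy0
    have hfix : F' y0 = y0 := hC.fixedPoint_isFixedPt
    refine ⟨eqv.symm y0.1, hmem' y0, ?_⟩
    have h4 : eqv (F (eqv.symm y0.1)) = y0.1 := congrArg Subtype.val hfix
    have h5 := congrArg eqv.symm h4
    rwa [Equiv.symm_apply_apply] at h5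
  -- the fixed point equation componentwise
  have hTu : ∀ i, (T22.mulVec u) i - lam * u i
      = -δv i - (E22.mulVec u) i + (ε + dot u) * u i := by
    have h1 : T.mulVec u = RHS u := by
      conv_lhs => rw [← hufix]
      exact hTNv (RHS u)
    intro i
    have h2 : T.mulVec u i = (T22.mulVec u) i - lam * u i := by
      rw [hTdef, Matrix.sub_mulVec, Matrix.smul_mulVec, Matrix.one_mulVec]
      simp
    have h3 := congrFun h1 i
    rw [h2] at h3
    rw [h3, hRHSdef]
    simp
  set μ := lam + ε + dot u with hμdef
  set x : Fin (m+1) → ℝ := Fin.cons 1 u with hxdef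
  have hMx : (MA + ME).mulVec x = μ • x := by
    funext i
    rw [Matrix.add_mulVec, Pi.add_apply, Pi.smul_apply, smul_eq_mul]
    refine Fin.cases ?_ ?_ i
    · have hA0 : (MA.mulVec x) 0 = lam + ∑ k, v k * u k := by
        simp only [Matrix.mulVec, dotProduct, hxdef, Fin.sum_univ_succ,
          Fin.cons_zero, Fin.cons_succ, mul_one, hlam, hv]
      have hE0 : (ME.mulVec x) 0 = ε + ∑ k, r k * u k := by
        simp only [Matrix.mulVec, dotProduct, hxdef, Fin.sum_univ_succ,
          Fin.cons_zero, Fin.cons_succ, mul_one, ← hεdef, hrdef]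
      rw [hA0, hE0]
      have hsum : ∑ k, g k * u k = (∑ k, v k * u k) + ∑ k, r k * u k := by
        rw [← Finset.sum_add_distrib]
        exact Finset.sum_congr rfl fun k _ => by rw [hgdef]; ring
      have hx0 : x 0 = 1 := rfl
      rw [hx0, mul_one, hμdef]
      have hdu : dot u = ∑ k : Fin m, g k * u k := rfl
      rw [hdu, hsum]
      ring
    · intro i
      have hAi : (MA.mulVec x) i.succ = ∑ k, T22 i k * u k := by
        simp only [Matrix.mulVec, dotProduct, hxdef, Fin.sum_univ_succ,
          Fin.cons_zero, Fin.cons_succ, mul_one, hzero, hT, zero_add]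
      have hEi : (ME.mulVec x) i.succ = δv i + ∑ k, (E22 i k) * u k := by
        simp only [Matrix.mulVec, dotProduct, hxdef, Fin.sum_univ_succ,
          Fin.cons_zero, Fin.cons_succ, mul_one, hδ, hE22def, Matrix.of_apply]
      have hxsucc : x i.succ = u i := rfl
      rw [hAi, hEi, hxsucc]
      have h6 := hTu i
      have h7 : (T22.mulVec u) i = ∑ k, T22 i k * u k := rfl
      have h8 : (E22.mulVec u) i = ∑ k, E22 i k * u k := rfl
      rw [h7, h8] at h6
      rw [hμdef]
      linarith [h6]
  have hAEQ : (A + E).mulVec (Q.mulVec x) = μ • (Q.mulVec x) := by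
    have h1 : (A + E) * Q = Q * (MA + ME) := by
      calc (A + E) * Q = 1 * ((A + E) * Q) := (one_mul _).symm
        _ = (Q * Q.transpose) * ((A + E) * Q) := by rw [hQQ]
        _ = Q * (MA + ME) := by
            rw [hMAdef, hMEdef]
            noncomm_ring
    calc (A + E).mulVec (Q.mulVec x) = ((A + E) * Q).mulVec x :=
          Matrix.mulVec_mulVec x (A + E) Q
      _ = (Q * (MA + ME)).mulVec x := by rw [h1]
      _ = Q.mulVec ((MA + ME).mulVec x) := (Matrix.mulVec_mulVec x Q (MA + ME)).symm
      _ = Q.mulVec (μ • x) := by rw [hMx]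
      _ = μ • Q.mulVec x := by rw [Matrix.mulVec_smul]
  -- final assembly
  refine ⟨u, ?_, ?_⟩
  · calc _root_.enorm u ≤ ρ := huρ
      _ ≤ 4 * _root_.enorm δv / σ := by
        rw [hρdef, div_le_div_iff₀ hσpos hσpos]
        nlinarith [enorm_nonneg' δv, hσpos]
  · set s := Real.sqrt (1 + ∑ j, u j ^ 2) with hsdef
    have hsumnn : (0:ℝ) ≤ ∑ j, u j ^ 2 := Finset.sum_nonneg fun j _ => sq_nonneg (u j)
    have hspos : 0 < s := Real.sqrt_pos.mpr (by linarith)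
    have hsval : _root_.enorm x = s := by
      rw [hxdef, enorm_cons, one_pow, hsdef]
    have hQx : ∀ i, Q.mulVec x i = Q i 0 + (Matrix.of fun i (j : Fin m) => Q i j.succ).mulVec u i := by
      intro i
      simp only [Matrix.mulVec, dotProduct, hxdef, Fin.sum_univ_succ,
        Fin.cons_zero, Fin.cons_succ, mul_one, Matrix.of_apply]
    have hqt : (fun i => (Q i 0 + (Matrix.of fun i (j : Fin m) => Q i j.succ).mulVec u i) / s)
        = s⁻¹ • Q.mulVec x := by
      funext i
      rw [Pi.smul_apply, smul_eq_mul, hQx i, div_eq_inv_mul]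
    show _root_.enorm (fun i => (Q i 0 + (Matrix.of fun i (j : Fin m) => Q i j.succ).mulVec u i) / s) = 1
      ∧ ∃ μ' : ℝ, (A + E).mulVec
          (fun i => (Q i 0 + (Matrix.of fun i (j : Fin m) => Q i j.succ).mulVec u i) / s)
        = μ' • (fun i => (Q i 0 + (Matrix.of fun i (j : Fin m) => Q i j.succ).mulVec u i) / s)
    rw [hqt]
    constructor
    · rw [enorm_smul', abs_of_pos (inv_pos.mpr hspos), enorm_mulVec_orth Q hQ, hsval,
        inv_mul_cancel₀ (ne_of_gt hspos)]
    · refine ⟨μ, ?_⟩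
      rw [Matrix.mulVec_smul, hAEQ, smul_comm]
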